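/- Let C be the set of all Dirac probability measures δ_x on X^∞, over all sequences x ∈ X^∞ (i.e., the data is an arbitrary deterministic sequence). Then V_C = log₂|X|, the maximal possible worst-case asymptotic error. -/

import Mathlib

set_option linter.unusedSectionVars false


open MeasureTheory Filter
open scoped ENNReal

variable {X : Type} [Fintype X] [Nonempty X] [MeasurableSpace X] [DiscreteMeasurableSpace X]

/-- Cylinder set of sequences beginning with `x`. -/
def cyl {X : Type} {n : ℕ} (x : Fin n → X) : Set (ℕ → X) :=
  {ω | ∀ i : Fin n, ω (i : ℕ) = x i}

/-- `p · log₂(p/q)` with the conventions `0 · log₂(0/q) = 0` and `p · log₂(p/0) = +∞` for `p > 0`. -/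
noncomputable def klTerm (p q : ℝ) : EReal :=
  if p = 0 then 0 else if q = 0 then ⊤ else ((p * Real.logb 2 (p / q) : ℝ) : EReal)

/-- Expected cumulative KL divergence `d_n(μ,ρ)`. -/
noncomputable def klDiv (n : ℕ) (μ ρ : Measure (ℕ → X)) : EReal :=
  ∑ x : Fin n → X, klTerm (μ (cyl x)).toReal (ρ (cyl x)).toReal

/-- Asymptotic average KL loss `D(μ,ρ)`. -/
noncomputable def Dbar (μ ρ : Measure (ℕ → X)) : EReal :=
  Filter.limsup (fun n : ℕ => (((n : ℝ)⁻¹ : ℝ) : EReal) * klDiv n μ ρ) Filter.atTop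

/-- Minimax value `V_C`. -/
noncomputable def Vmin (C : Set (Measure (ℕ → X))) : EReal :=
  ⨅ ρ : {ρ : Measure (ℕ → X) // IsProbabilityMeasure ρ}, ⨆ μ ∈ C, Dbar μ ρ.1

/-- Countable mixture `Σ_k v_k μ_k`. -/
noncomputable def mixture (v : ℕ → ℝ) (μs : ℕ → Measure (ℕ → X)) : Measure (ℕ → X) :=
  MeasureTheory.Measure.sum (fun k => ENNReal.ofReal (v k) • μs k)

lemma measurableSet_cyl {n : ℕ} (x : Fin n → X) : MeasurableSet (cyl x) := by
  have h : cyl x = ⋂ i : Fin n, (fun ω : ℕ → X => ω (i : ℕ)) ⁻¹' {x i} := by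
    ext ω; simp [cyl]
  rw [h]
  exact MeasurableSet.iInter fun i => (measurable_pi_apply _) (MeasurableSet.singleton _)

lemma cyl_eq_iUnion {n : ℕ} (w : Fin n → X) :
    cyl w = ⋃ a : X, cyl (Fin.snoc w a) := by
  ext ω
  simp only [Set.mem_iUnion]
  constructor
  · intro h
    refine ⟨ω n, fun i => ?_⟩
    refine Fin.lastCases ?_ (fun j => ?_) i
    · simp [cyl, Fin.snoc_last]
    · simpa [Fin.snoc_castSucc] using h j
  · rintro ⟨a, h⟩ i
    simpa [Fin.snoc_castSucc] using h (Fin.castSucc i)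

lemma cyl_disjoint {n : ℕ} (w : Fin n → X) :
    Pairwise (Function.onFun Disjoint fun a : X => cyl (Fin.snoc w a)) := by
  intro a b hab
  rw [Function.onFun, Set.disjoint_left]
  intro ω ha hb
  apply hab
  have h1 := ha (Fin.last n)
  have h2 := hb (Fin.last n)
  simp only [Fin.val_last, Fin.snoc_last] at h1 h2
  rw [← h1, h2]

lemma measure_cyl_snoc (ρ : Measure (ℕ → X)) {n : ℕ} (w : Fin n → X) :
    ρ (cyl w) = ∑ a : X, ρ (cyl (Fin.snoc w a)) := by
  rw [cyl_eq_iUnion w, measure_iUnion (cyl_disjoint w) fun a => measurableSet_cyl _,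
    tsum_fintype]

lemma cyl_zero_eq_univ (w : Fin 0 → X) : cyl w = Set.univ := by
  ext ω; simp only [Set.mem_univ, iff_true, cyl, Set.mem_setOf_eq]
  exact fun i => i.elim0

lemma sum_measure_cyl (ρ : Measure (ℕ → X)) : ∀ n : ℕ, ∑ w : Fin n → X, ρ (cyl w) = ρ Set.univ
  | 0 => by
    rw [Fintype.sum_subsingleton _ (fun i : Fin 0 => i.elim0), cyl_zero_eq_univ]
  | n + 1 => by
    rw [← (Fin.snocEquiv (fun _ : Fin (n+1) => X)).sum_comp (fun w => ρ (cyl w)),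
      Fintype.sum_prod_type, Finset.sum_comm]
    refine Eq.trans (Finset.sum_congr rfl fun w _ => ?_) (sum_measure_cyl ρ n)
    exact (measure_cyl_snoc ρ w).symm

lemma klDiv_dirac (x : ℕ → X) (ρ : Measure (ℕ → X)) (n : ℕ) :
    klDiv n (Measure.dirac x) ρ
      = klTerm 1 (ρ (cyl (fun i : Fin n => x (i : ℕ)))).toReal := by
  classical
  unfold klDiv
  rw [Finset.sum_eq_single (fun i : Fin n => x (i : ℕ))]
  · congr 1
    rw [Measure.dirac_apply' _ (measurableSet_cyl _),
      Set.indicator_of_mem (show x ∈ cyl (fun i : Fin n => x (i : ℕ)) from fun i => rfl)]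
    simp
  · intro w _ hw
    have hx : x ∉ cyl w := fun h => hw (funext fun i => (h i).symm)
    rw [Measure.dirac_apply' _ (measurableSet_cyl _), Set.indicator_of_notMem hx]
    simp [klTerm]
  · intro h
    exact absurd (Finset.mem_univ _) h

lemma klTerm_one (q : ℝ) (hq : q ≠ 0) :
    klTerm 1 q = ((- Real.logb 2 q : ℝ) : EReal) := by
  rw [klTerm, if_neg one_ne_zero, if_neg hq]
  norm_num [Real.logb_inv]

noncomputable def pick (f : X → ℝ≥0∞) : X :=
  (Finset.exists_min_image Finset.univ f
    ⟨Classical.arbitrary X, Finset.mem_univ _⟩).choose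

lemma pick_le (f : X → ℝ≥0∞) (b : X) : f (pick f) ≤ f b :=
  (Finset.exists_min_image Finset.univ f
    ⟨Classical.arbitrary X, Finset.mem_univ _⟩).choose_spec.2 b (Finset.mem_univ b)

noncomputable def gseq (ρ : Measure (ℕ → X)) : (n : ℕ) → (Fin n → X)
  | 0 => fun i => i.elim0
  | n + 1 => Fin.snoc (gseq ρ n) (pick fun a => ρ (cyl (Fin.snoc (gseq ρ n) a)))

lemma gseq_bound (ρ : Measure (ℕ → X)) [IsProbabilityMeasure ρ] :
    ∀ n : ℕ, ρ (cyl (gseq ρ n)) ≤ ((Fintype.card X : ℝ≥0∞) ^ n)⁻¹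
  | 0 => by
    rw [cyl_zero_eq_univ]
    simp
  | n + 1 => by
    have hcard : (Fintype.card X : ℝ≥0∞) ≠ 0 := by
      simp [Fintype.card_ne_zero]
    have hcard' : (Fintype.card X : ℝ≥0∞) ≠ ⊤ := ENNReal.natCast_ne_top _
    have hmul : (Fintype.card X : ℝ≥0∞) * ρ (cyl (gseq ρ (n + 1)))
        ≤ ρ (cyl (gseq ρ n)) := by
      calc (Fintype.card X : ℝ≥0∞) * ρ (cyl (gseq ρ (n + 1)))
          = ∑ _a : X, ρ (cyl (gseq ρ (n + 1))) := by
            rw [Finset.sum_const, Finset.card_univ, nsmul_eq_mul]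
        _ ≤ ∑ a : X, ρ (cyl (Fin.snoc (gseq ρ n) a)) := by
            refine Finset.sum_le_sum fun a _ => ?_
            exact pick_le (fun a => ρ (cyl (Fin.snoc (gseq ρ n) a))) a
        _ = ρ (cyl (gseq ρ n)) := (measure_cyl_snoc ρ _).symm
    have h2 : ρ (cyl (gseq ρ (n + 1)))
        ≤ (Fintype.card X : ℝ≥0∞)⁻¹ * ρ (cyl (gseq ρ n)) := by
      calc ρ (cyl (gseq ρ (n + 1)))
          = ((Fintype.card X : ℝ≥0∞)⁻¹ * (Fintype.card X : ℝ≥0∞)) * ρ (cyl (gseq ρ (n + 1))) := by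
            rw [ENNReal.inv_mul_cancel hcard hcard', one_mul]
        _ = (Fintype.card X : ℝ≥0∞)⁻¹ * ((Fintype.card X : ℝ≥0∞) * ρ (cyl (gseq ρ (n + 1)))) := by
            rw [mul_assoc]
        _ ≤ (Fintype.card X : ℝ≥0∞)⁻¹ * ρ (cyl (gseq ρ n)) := mul_le_mul_right hmul _
    calc ρ (cyl (gseq ρ (n + 1)))
        ≤ (Fintype.card X : ℝ≥0∞)⁻¹ * ρ (cyl (gseq ρ n)) := h2
      _ ≤ (Fintype.card X : ℝ≥0∞)⁻¹ * ((Fintype.card X : ℝ≥0∞) ^ n)⁻¹ :=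
          mul_le_mul_right (gseq_bound ρ n) _
      _ = ((Fintype.card X : ℝ≥0∞) ^ (n + 1))⁻¹ := by
          rw [pow_succ, ENNReal.mul_inv (Or.inl (pow_ne_zero _ hcard)) (Or.inl (ENNReal.pow_ne_top hcard'))]
          ring

noncomputable def greedy (ρ : Measure (ℕ → X)) : ℕ → X :=
  fun n => gseq ρ (n + 1) (Fin.last n)

lemma gseq_consistent (ρ : Measure (ℕ → X)) :
    ∀ (m n : ℕ) (h : n ≤ m) (i : Fin n),
      gseq ρ m ⟨(i : ℕ), lt_of_lt_of_le i.isLt h⟩ = gseq ρ n i := by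
  intro m
  induction m with
  | zero => intro n h i; exact absurd (lt_of_lt_of_le i.isLt h) (by omega)
  | succ m ih =>
    intro n h i
    rcases Nat.eq_or_lt_of_le h with h1 | h1
    · subst h1; rfl
    · have hn : n ≤ m := by omega
      have hi : (i : ℕ) < m := lt_of_lt_of_le i.isLt hn
      have : (⟨(i : ℕ), lt_of_lt_of_le i.isLt h⟩ : Fin (m + 1))
          = Fin.castSucc ⟨(i : ℕ), hi⟩ := rfl
      rw [this, gseq, Fin.snoc_castSucc, ih n hn i]

lemma greedy_prefix (ρ : Measure (ℕ → X)) (n : ℕ) :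
    (fun i : Fin n => greedy ρ (i : ℕ)) = gseq ρ n := by
  funext i
  have h2 := gseq_consistent ρ n ((i : ℕ) + 1) i.isLt (Fin.last (i : ℕ))
  simpa [greedy, Fin.val_last, Fin.eta] using h2.symm

lemma exists_uniform_measure :
    ∃ ρ : Measure (ℕ → X), IsProbabilityMeasure ρ ∧
      ∀ (n : ℕ) (w : Fin n → X), ρ (cyl w) = ((Fintype.card X : ℝ≥0∞) ^ n)⁻¹ := by
  classical
  haveI : NeZero (Fintype.card X) := ⟨Fintype.card_ne_zero⟩
  set N := Fintype.card X with hNdef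
  letI tZ : TopologicalSpace (ZMod N) := ⊥
  haveI : DiscreteTopology (ZMod N) := ⟨rfl⟩
  letI mZ : MeasurableSpace (ZMod N) := ⊤
  haveI : BorelSpace (ZMod N) := ⟨borel_eq_top_of_discrete.symm⟩
  haveI : DiscreteMeasurableSpace (ZMod N) := ⟨fun _ => trivial⟩
  haveI : IsTopologicalAddGroup (ZMod N) :=
    { continuous_add := continuous_of_discreteTopology
      continuous_neg := continuous_of_discreteTopology }
  -- the group G of sequences
  let G := ℕ → ZMod N
  haveI : CompactSpace G := by infer_instance
  haveI : T2Space G := by infer_instance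
  haveI : BorelSpace G := Pi.borelSpace
  let K : TopologicalSpace.PositiveCompacts G := ⊤
  let μ : Measure G := Measure.addHaarMeasure K
  have hμuniv : μ Set.univ = 1 := by
    have := Measure.addHaarMeasure_self (K₀ := K)
    simpa [K, TopologicalSpace.PositiveCompacts.coe_top] using this
  haveI hμprob : IsProbabilityMeasure μ := ⟨hμuniv⟩
  -- all cylinders of the same length have the same measure
  have hinv : ∀ (n : ℕ) (w w' : Fin n → ZMod N), μ (cyl w) = μ (cyl w') := by
    intro n w w'
    set v : G := fun m => if h : m < n then w' ⟨m, h⟩ - w ⟨m, h⟩ else 0 with hv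
    have hpre : (fun ω : G => v + ω) ⁻¹' (cyl w') = cyl w := by
      have hvi : ∀ i : Fin n, v (i : ℕ) = w' i - w i := fun i => dif_pos i.isLt
      ext ω
      simp only [Set.mem_preimage, cyl, Set.mem_setOf_eq, Pi.add_apply]
      constructor
      · intro h i
        have h1 : v (i : ℕ) + ω (i : ℕ) = w' i := h i
        rw [hvi i] at h1
        have h2 : (w' i - w i) + w i = w' i := by abel
        exact add_left_cancel (h1.trans h2.symm)
      · intro h i
        show v (i : ℕ) + ω (i : ℕ) = w' i
        rw [hvi i, h i]
        abel
    calc μ (cyl w) = μ ((fun ω : G => v + ω) ⁻¹' (cyl w')) := by rw [hpre]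
      _ = μ (cyl w') := measure_preimage_add μ v (cyl w')
  -- hence each cylinder has measure (N^n)⁻¹
  have hcylZ : ∀ (n : ℕ) (w : Fin n → ZMod N), μ (cyl w) = ((N : ℝ≥0∞) ^ n)⁻¹ := by
    intro n w
    have hsum := sum_measure_cyl μ n
    have hconst : ∀ w' : Fin n → ZMod N, μ (cyl w') = μ (cyl w) := fun w' => hinv n w' w
    rw [Finset.sum_congr rfl (fun w' _ => hconst w'), Finset.sum_const, Finset.card_univ,
      hμuniv, nsmul_eq_mul] at hsum
    have hcard : (Fintype.card (Fin n → ZMod N) : ℝ≥0∞) = (N : ℝ≥0∞) ^ n := by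
      rw [Fintype.card_fun, ZMod.card, Fintype.card_fin]
      push_cast
      ring
    rw [hcard, mul_comm] at hsum
    exact ENNReal.eq_inv_of_mul_eq_one_left hsum
  -- transport along an equivalence `ZMod N ≃ X`
  let e : ZMod N ≃ X := Fintype.equivOfCardEq (by rw [ZMod.card])
  let f : G → (ℕ → X) := fun ω k => e (ω k)
  have hf : Measurable f :=
    measurable_pi_lambda _ fun k => measurable_from_top.comp (measurable_pi_apply k)
  refine ⟨Measure.map f μ, Measure.isProbabilityMeasure_map hf.aemeasurable, fun n w => ?_⟩
  rw [Measure.map_apply hf (measurableSet_cyl w)]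
  have hpre : f ⁻¹' (cyl w) = cyl (fun i : Fin n => e.symm (w i)) := by
    ext ω
    simp only [Set.mem_preimage, cyl, Set.mem_setOf_eq, f]
    constructor
    · intro h i
      rw [← h i]
      simp
    · intro h i
      rw [h i]
      simp
  rw [hpre, hcylZ]

lemma card_pos_real : (0 : ℝ) < (Fintype.card X : ℝ) := by
  exact_mod_cast Fintype.card_pos

lemma Dbar_dirac_uniform (ρ : Measure (ℕ → X))
    (hcyl : ∀ (n : ℕ) (w : Fin n → X), ρ (cyl w) = ((Fintype.card X : ℝ≥0∞) ^ n)⁻¹)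
    (x : ℕ → X) :
    Dbar (Measure.dirac x) ρ = ((Real.logb 2 (Fintype.card X) : ℝ) : EReal) := by
  have hNpos : (0 : ℝ) < (Fintype.card X : ℝ) := card_pos_real
  have key : ∀ n : ℕ, 1 ≤ n →
      (((n : ℝ)⁻¹ : ℝ) : EReal) * klDiv n (Measure.dirac x) ρ
        = ((Real.logb 2 (Fintype.card X) : ℝ) : EReal) := by
    intro n hn
    have hq : ((((Fintype.card X : ℝ≥0∞) ^ n)⁻¹).toReal)
        = (((Fintype.card X : ℝ) ^ n)⁻¹) := by
      rw [ENNReal.toReal_inv, ENNReal.toReal_pow, ENNReal.toReal_natCast]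
    have hqne : (((Fintype.card X : ℝ) ^ n)⁻¹) ≠ 0 := by positivity
    rw [klDiv_dirac, hcyl n _, hq, klTerm_one _ hqne]
    have hlog : -Real.logb 2 (((Fintype.card X : ℝ) ^ n)⁻¹)
        = (n : ℝ) * Real.logb 2 (Fintype.card X) := by
      rw [Real.logb_inv, Real.logb_pow, neg_neg]
    rw [hlog, ← EReal.coe_mul]
    congr 1
    have hn0 : (n : ℝ) ≠ 0 := by positivity
    field_simp
  have hev : ∀ᶠ n : ℕ in Filter.atTop,
      (((n : ℝ)⁻¹ : ℝ) : EReal) * klDiv n (Measure.dirac x) ρ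
        = ((Real.logb 2 (Fintype.card X) : ℝ) : EReal) :=
    Filter.eventually_atTop.2 ⟨1, key⟩
  rw [Dbar, Filter.limsup_congr hev, Filter.limsup_const]

lemma le_Dbar_greedy (ρ : Measure (ℕ → X)) [IsProbabilityMeasure ρ] :
    ((Real.logb 2 (Fintype.card X) : ℝ) : EReal)
      ≤ Dbar (Measure.dirac (greedy ρ)) ρ := by
  have hNpos : (0 : ℝ) < (Fintype.card X : ℝ) := card_pos_real
  set L : ℝ := Real.logb 2 (Fintype.card X) with hL
  have key : ∀ n : ℕ, 1 ≤ n →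
      ((L : ℝ) : EReal) ≤ (((n : ℝ)⁻¹ : ℝ) : EReal) * klDiv n (Measure.dirac (greedy ρ)) ρ := by
    intro n hn
    have hnpos : (0 : ℝ) < (n : ℝ) := by exact_mod_cast hn
    rw [klDiv_dirac, greedy_prefix]
    set q : ℝ := (ρ (cyl (gseq ρ n))).toReal with hqdef
    have hqle : q ≤ (((Fintype.card X : ℝ) ^ n)⁻¹) := by
      have hb := gseq_bound ρ n
      have hfin : (((Fintype.card X : ℝ≥0∞) ^ n)⁻¹) ≠ ⊤ := by
        rw [ENNReal.inv_ne_top]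
        positivity
      have := ENNReal.toReal_mono hfin hb
      rwa [ENNReal.toReal_inv, ENNReal.toReal_pow, ENNReal.toReal_natCast] at this
    rcases eq_or_ne q 0 with hq0 | hq0
    · rw [hq0]
      have htop : klTerm 1 0 = ⊤ := by rw [klTerm, if_neg one_ne_zero, if_pos rfl]
      rw [htop, EReal.coe_mul_top_of_pos (by positivity : (0:ℝ) < (n : ℝ)⁻¹)]
      exact le_top
    · have hqpos : (0 : ℝ) < q := lt_of_le_of_ne ENNReal.toReal_nonneg (Ne.symm hq0)
      rw [klTerm_one _ hq0]
      have hlog : (n : ℝ) * L ≤ -Real.logb 2 q := by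
        have h1 : Real.logb 2 q ≤ Real.logb 2 (((Fintype.card X : ℝ) ^ n)⁻¹) :=
          Real.logb_le_logb_of_le (by norm_num) hqpos hqle
        have h2 : Real.logb 2 (((Fintype.card X : ℝ) ^ n)⁻¹) = -((n : ℝ) * L) := by
          rw [Real.logb_inv, Real.logb_pow, hL]
        linarith
      rw [← EReal.coe_mul]
      apply EReal.coe_le_coe_iff.2
      have : (n : ℝ)⁻¹ * ((n : ℝ) * L) ≤ (n : ℝ)⁻¹ * (-Real.logb 2 q) :=
        mul_le_mul_of_nonneg_left hlog (by positivity)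
      calc L = (n : ℝ)⁻¹ * ((n : ℝ) * L) := by field_simp
        _ ≤ (n : ℝ)⁻¹ * (-Real.logb 2 q) := this
  have hev : (fun _ : ℕ => ((L : ℝ) : EReal)) ≤ᶠ[Filter.atTop]
      (fun n : ℕ => (((n : ℝ)⁻¹ : ℝ) : EReal) * klDiv n (Measure.dirac (greedy ρ)) ρ) :=
    Filter.eventually_atTop.2 ⟨1, key⟩
  calc ((L : ℝ) : EReal)
      = Filter.limsup (fun _ : ℕ => ((L : ℝ) : EReal)) Filter.atTop :=
        (Filter.limsup_const _).symm
    _ ≤ Dbar (Measure.dirac (greedy ρ)) ρ := Filter.limsup_le_limsup hev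


/-- for C the set of all Dirac measures on one-way infinite sequences
(arbitrary deterministic data), V_C = log₂|X|, the maximal possible worst-case
asymptotic error. -/
theorem statement16 :
    Vmin {m : Measure (ℕ → X) | ∃ x : ℕ → X, m = Measure.dirac x}
      = ((Real.logb 2 (Fintype.card X) : ℝ) : EReal) := by
  obtain ⟨ρu, hprob, hcyl⟩ := exists_uniform_measure (X := X)
  apply le_antisymm
  · refine iInf_le_of_le ⟨ρu, hprob⟩ ?_
    refine iSup_le fun μ => iSup_le fun hμ => ?_
    obtain ⟨x, rfl⟩ := hμ
    exact le_of_eq (Dbar_dirac_uniform ρu hcyl x)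
  · refine le_iInf fun p => ?_
    obtain ⟨ρ, hρ⟩ := p
    haveI := hρ
    refine le_trans (le_Dbar_greedy ρ) ?_
    exact le_iSup₂ (f := fun μ (_ : μ ∈ {m : Measure (ℕ → X) | ∃ x : ℕ → X, m = Measure.dirac x}) =>
      Dbar μ ρ) (Measure.dirac (greedy ρ)) ⟨greedy ρ, rfl⟩
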